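/- For every U ∈ D_{p,q} with n = p+q, the product of all 2^n conjugates ∏_{A ⊆ {1,…,n}} U^{(A)} is a scalar (a real multiple of 1), and it equals Det(U) := det(β(U)), the determinant of the regular representation matrix of U. -/

import Mathlib

open Finset
open scoped symmDiff

noncomputable section

/-- Sign of the `i`-th generator: `+1` if `i < p`, `-1` otherwise. -/
def eps (p : ℕ) {n : ℕ} (i : Fin n) : ℝ := if (i : ℕ) < p then 1 else -1

lemma eps_mul_self (p : ℕ) {n : ℕ} (i : Fin n) : eps p i * eps p i = 1 := by
  unfold eps; split <;> norm_num

/-- Structure constant `σ(A,B) = ∏_{i ∈ A ∩ B} ε_i`. -/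
def sgn (p : ℕ) {n : ℕ} (A B : Finset (Fin n)) : ℝ := ∏ i ∈ A ∩ B, eps p i

/-- The commutative analogue of a Clifford algebra `D_{p,q}`, realized as the space of
coefficient functions on the basis `{e_A : A ⊆ {1,…,n}}`, `n = p + q`, with multiplication
`e_A e_B = σ(A,B) e_{A Δ B}`. -/
def Dl (p q : ℕ) : Type := Finset (Fin (p + q)) → ℝ

namespace Dl

variable {p q : ℕ}

instance : AddCommGroup (Dl p q) := Pi.addCommGroup
instance : Module ℝ (Dl p q) := Pi.module _ _ _

/-- Multiplication: `(U·V)_C = ∑_{A Δ B = C} σ(A,B) U_A V_B`. -/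
def mul' (U V : Dl p q) : Dl p q :=
  fun C => ∑ A : Finset (Fin (p + q)), sgn p A (A ∆ C) * U A * V (A ∆ C)

/-- The unit `1 = e_∅`. -/
def one' : Dl p q := fun A => if A = ∅ then 1 else 0

lemma sgn_empty_left {n : ℕ} (B : Finset (Fin n)) : sgn p ∅ B = 1 := by
  simp [sgn]

lemma sgn_empty_right {n : ℕ} (A : Finset (Fin n)) : sgn p A ∅ = 1 := by
  simp [sgn]

lemma sgn_prod_ite {n : ℕ} (X Y : Finset (Fin n)) :
    sgn p X Y = ∏ i : Fin n, (if i ∈ X ∩ Y then eps p i else 1) := by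
  rw [Finset.prod_ite_mem, Finset.univ_inter, sgn]

lemma sgn_cocycle {n : ℕ} (p : ℕ) (A B C : Finset (Fin n)) :
    sgn p B (B ∆ C) * sgn p A (A ∆ B) = sgn p A (A ∆ C) * sgn p (A ∆ B) (B ∆ C) := by
  rw [sgn_prod_ite, sgn_prod_ite, sgn_prod_ite, sgn_prod_ite,
    ← Finset.prod_mul_distrib, ← Finset.prod_mul_distrib]
  refine Finset.prod_congr rfl fun i _ => ?_
  by_cases hA : i ∈ A <;> by_cases hB : i ∈ B <;> by_cases hC : i ∈ C <;>
    simp [Finset.mem_inter, Finset.mem_symmDiff, hA, hB, hC]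

lemma sd_helper {n : ℕ} (A B C : Finset (Fin n)) : (A ∆ B) ∆ (A ∆ C) = B ∆ C := by
  rw [symmDiff_comm A B, symmDiff_assoc, symmDiff_symmDiff_cancel_left]

theorem mul_comm' (U V : Dl p q) : mul' U V = mul' V U := by
  funext C
  refine Fintype.sum_equiv
    (Function.Involutive.toPerm (fun A => A ∆ C)
      (by intro A; exact symmDiff_symmDiff_cancel_right C A)) _ _ fun A => ?_
  try simp only [Function.Involutive.coe_toPerm]
  try simp only [Function.Involutive.toPerm, Equiv.coe_fn_mk]
  rw [symmDiff_symmDiff_cancel_right]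
  rw [show sgn p A (A ∆ C) = sgn p (A ∆ C) A by rw [sgn, sgn, Finset.inter_comm]]
  ring

theorem mul_assoc' (U V W : Dl p q) : mul' (mul' U V) W = mul' U (mul' V W) := by
  funext C
  show ∑ B : Finset (Fin (p+q)), sgn p B (B ∆ C) * (mul' U V) B * W (B ∆ C)
      = ∑ A : Finset (Fin (p+q)), sgn p A (A ∆ C) * U A * (mul' V W) (A ∆ C)
  unfold mul'
  simp only [Finset.sum_mul, Finset.mul_sum]
  rw [Finset.sum_comm]
  refine Finset.sum_congr rfl fun A _ => ?_
  refine Fintype.sum_equiv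
    (Function.Involutive.toPerm (fun B => A ∆ B)
      (by intro B; exact symmDiff_symmDiff_cancel_left A B)) _ _ fun B => ?_
  try simp only [Function.Involutive.coe_toPerm]
  try simp only [Function.Involutive.toPerm, Equiv.coe_fn_mk]
  rw [sd_helper]
  have h := sgn_cocycle p A B C
  linear_combination (U A * V (A ∆ B) * W (B ∆ C)) * h

theorem one_mul' (U : Dl p q) : mul' one' U = U := by
  funext C
  unfold mul' one'
  rw [Finset.sum_eq_single (∅ : Finset (Fin (p+q)))]
  · simp [sgn_empty_left, bot_eq_empty.symm ▸ (bot_symmDiff C : (⊥ : Finset (Fin (p+q))) ∆ C = C)]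
  · intro A _ hA; simp [hA]
  · simp

theorem mul_one' (U : Dl p q) : mul' U one' = U := by
  funext C
  unfold mul' one'
  rw [Finset.sum_eq_single C]
  · simp [sgn, symmDiff_self, bot_eq_empty]
  · intro A _ hA
    have : A ∆ C ≠ ∅ := fun h =>
      hA (symmDiff_eq_bot.mp (by simpa [Finset.bot_eq_empty] using h))
    simp [this]
  · simp

theorem zero_mul' (U : Dl p q) : mul' 0 U = 0 := by
  funext C; unfold mul'
  simp [show ∀ A, (0 : Dl p q) A = 0 from fun _ => rfl]

theorem mul_zero' (U : Dl p q) : mul' U 0 = 0 := by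
  funext C; unfold mul'
  simp [show ∀ A, (0 : Dl p q) A = 0 from fun _ => rfl]

theorem left_distrib' (U V W : Dl p q) : mul' U (V + W) = mul' U V + mul' U W := by
  funext C
  show ∑ A : Finset (Fin (p+q)), sgn p A (A ∆ C) * U A * (V (A ∆ C) + W (A ∆ C))
      = mul' U V C + mul' U W C
  unfold mul'
  rw [← Finset.sum_add_distrib]
  exact Finset.sum_congr rfl fun A _ => by ring

theorem right_distrib' (U V W : Dl p q) : mul' (U + V) W = mul' U W + mul' V W := by
  funext C
  show ∑ A : Finset (Fin (p+q)), sgn p A (A ∆ C) * (U A + V A) * W (A ∆ C)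
      = mul' U W C + mul' V W C
  unfold mul'
  rw [← Finset.sum_add_distrib]
  exact Finset.sum_congr rfl fun A _ => by ring

instance : CommRing (Dl p q) :=
  { (inferInstance : AddCommGroup (Dl p q)) with
    mul := mul'
    one := one'
    left_distrib := left_distrib'
    right_distrib := right_distrib'
    zero_mul := zero_mul'
    mul_zero := mul_zero'
    mul_assoc := mul_assoc'
    one_mul := one_mul'
    mul_one := mul_one'
    mul_comm := mul_comm' }

lemma mul_def (U V : Dl p q) : U * V = mul' U V := rfl
lemma one_def : (1 : Dl p q) = one' := rfl

instance : Algebra ℝ (Dl p q) :=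
  Algebra.ofModule
    (fun r U V => by
      funext C
      show ∑ A : Finset (Fin (p+q)), sgn p A (A ∆ C) * (r * U A) * V (A ∆ C)
          = r * ∑ A : Finset (Fin (p+q)), sgn p A (A ∆ C) * U A * V (A ∆ C)
      rw [Finset.mul_sum]
      exact Finset.sum_congr rfl fun A _ => by ring)
    (fun r U V => by
      funext C
      show ∑ A : Finset (Fin (p+q)), sgn p A (A ∆ C) * U A * (r * V (A ∆ C))
          = r * ∑ A : Finset (Fin (p+q)), sgn p A (A ∆ C) * U A * V (A ∆ C)
      rw [Finset.mul_sum]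
      exact Finset.sum_congr rfl fun A _ => by ring)

/-- The coefficient of the basis element `e_A` in `U`. -/
def coeff (U : Dl p q) (A : Finset (Fin (p + q))) : ℝ := U A

/-- The basis element `e_A`. -/
def e (A : Finset (Fin (p + q))) : Dl p q := fun B => if B = A then 1 else 0

/-- The conjugation negating the generator `e_l`. -/
def conj (l : Fin (p + q)) (U : Dl p q) : Dl p q :=
  fun A => if l ∈ A then -U A else U A

/-- The superposition of the conjugations `(·)^{(i)}` over all `i ∈ S`:
it multiplies the coefficient of `e_B` by `(-1)^{|S ∩ B|}`. -/
def conjS (S : Finset (Fin (p + q))) (U : Dl p q) : Dl p q :=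
  fun B => (-1 : ℝ) ^ (S ∩ B).card * U B

/-- The regular (left multiplication) representation of `D_{p,q}`. -/
def rep (U : Dl p q) : Matrix (Finset (Fin (p + q))) (Finset (Fin (p + q))) ℝ :=
  fun C B => coeff (U * e B) C

/-- The determinant of an element of `D_{p,q}`. -/
def Det (U : Dl p q) : ℝ := (rep U).det

/-- The adjoint: product of all conjugates of `U` other than `U` itself. -/
def Adj (U : Dl p q) : Dl p q := ∏ A ∈ Finset.univ.erase (∅ : Finset (Fin (p + q))), conjS A U

/-! ### Auxiliary lemmas for the main theorem -/

section Aux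

lemma prod_mem_eq_prod_ite {n : ℕ} {M : Type*} [CommMonoid M] (f : Fin n → M)
    (X : Finset (Fin n)) : ∏ i ∈ X, f i = ∏ i : Fin n, (if i ∈ X then f i else 1) := by
  rw [Finset.prod_ite_mem, Finset.univ_inter]

lemma neg_one_pow_card_eq {n : ℕ} {R : Type*} [CommRing R] (X : Finset (Fin n)) :
    ((-1 : R)) ^ X.card = ∏ i : Fin n, (if i ∈ X then (-1 : R) else 1) := by
  rw [← prod_mem_eq_prod_ite, Finset.prod_const]

/-- Parity lemma, first argument fixed. -/
lemma parity1 {n : ℕ} {R : Type*} [CommRing R] (S A B : Finset (Fin n)) :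
    ((-1 : R)) ^ (S ∩ A).card * (-1) ^ (S ∩ B).card = (-1) ^ (S ∩ (A ∆ B)).card := by
  rw [neg_one_pow_card_eq, neg_one_pow_card_eq, neg_one_pow_card_eq,
    ← Finset.prod_mul_distrib]
  refine Finset.prod_congr rfl fun i _ => ?_
  by_cases hS : i ∈ S <;> by_cases hA : i ∈ A <;> by_cases hB : i ∈ B <;>
    simp [Finset.mem_inter, Finset.mem_symmDiff, hS, hA, hB]

/-- Parity lemma, second argument fixed. -/
lemma parity2 {n : ℕ} {R : Type*} [CommRing R] (S A B : Finset (Fin n)) :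
    ((-1 : R)) ^ (A ∩ S).card * (-1) ^ (B ∩ S).card = (-1) ^ ((A ∆ B) ∩ S).card := by
  rw [Finset.inter_comm A S, Finset.inter_comm B S, Finset.inter_comm (A ∆ B) S]
  exact parity1 S A B

/-- The sum of signs `(-1)^{|S ∩ D|}` over all subsets `S`. -/
lemma sum_sign {n : ℕ} (D : Finset (Fin n)) :
    ∑ S : Finset (Fin n), ((-1 : ℂ)) ^ (S ∩ D).card
      = if D = ∅ then (2 : ℂ) ^ n else 0 := by
  have h : ∀ S : Finset (Fin n), ((-1 : ℂ)) ^ (S ∩ D).card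
      = ∏ i ∈ S, (if i ∈ D then (-1 : ℂ) else 1) := by
    intro S
    rw [Finset.prod_ite_mem, Finset.prod_const]
  simp only [h]
  have h2 : ∑ S : Finset (Fin n), ∏ i ∈ S, (if i ∈ D then (-1 : ℂ) else 1)
      = ∏ i : Fin n, ((if i ∈ D then (-1 : ℂ) else 1) + 1) := by
    rw [Finset.prod_add]
    rw [← Finset.powerset_univ]
    exact (Finset.sum_congr rfl fun t _ => by simp).symm
  rw [h2]
  by_cases hD : D = ∅
  · subst hD
    simp [Finset.prod_const]
    norm_num
  · obtain ⟨i, hi⟩ := Finset.nonempty_iff_ne_empty.mpr hD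
    rw [if_neg hD]
    exact Finset.prod_eq_zero (Finset.mem_univ i) (by simp [hi])

end Aux

/-! ### `conjS` is a ring homomorphism -/

lemma conjS_apply (B : Finset (Fin (p + q))) (U : Dl p q) (C : Finset (Fin (p + q))) :
    conjS B U C = (-1 : ℝ) ^ (B ∩ C).card * U C := rfl

lemma conjS_one (B : Finset (Fin (p + q))) : conjS B (1 : Dl p q) = 1 := by
  funext C
  show (-1 : ℝ) ^ (B ∩ C).card * one' C = one' C
  unfold one'
  by_cases h : C = ∅ <;> simp [h]

lemma conjS_mul (B : Finset (Fin (p + q))) (X Y : Dl p q) :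
    conjS B (X * Y) = conjS B X * conjS B Y := by
  funext C
  show (-1 : ℝ) ^ (B ∩ C).card * (mul' X Y) C = mul' (conjS B X) (conjS B Y) C
  unfold mul' conjS
  rw [Finset.mul_sum]
  refine Finset.sum_congr rfl fun A _ => ?_
  have h := parity1 (R := ℝ) B A (A ∆ C)
  rw [symmDiff_symmDiff_cancel_left] at h
  linear_combination (sgn p A (A ∆ C) * X A * Y (A ∆ C)) * h.symm

/-- `conjS B` as a monoid homomorphism. -/
def conjHom (B : Finset (Fin (p + q))) : Dl p q →* Dl p q where
  toFun := conjS B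
  map_one' := conjS_one B
  map_mul' := conjS_mul B

lemma conjS_conjS (B A : Finset (Fin (p + q))) (U : Dl p q) :
    conjS B (conjS A U) = conjS (B ∆ A) U := by
  funext C
  show (-1 : ℝ) ^ (B ∩ C).card * ((-1 : ℝ) ^ (A ∩ C).card * U C)
      = (-1 : ℝ) ^ ((B ∆ A) ∩ C).card * U C
  rw [← mul_assoc, parity2]

/-! ### Characters over `ℂ` -/

/-- `u i`: square root of `ε_i` in `ℂ`. -/
def uC (p : ℕ) {n : ℕ} (i : Fin n) : ℂ := if (i : ℕ) < p then 1 else Complex.I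

/-- `v i`: inverse of `u i`. -/
def vC (p : ℕ) {n : ℕ} (i : Fin n) : ℂ := if (i : ℕ) < p then 1 else -Complex.I

lemma uC_mul_vC (p : ℕ) {n : ℕ} (i : Fin n) : uC p i * vC p i = 1 := by
  unfold uC vC; split <;> simp [Complex.I_mul_I]

/-- The character weight `w(S,A) = (∏_{i∈A} u_i)·(-1)^{|S∩A|}`. -/
def wC (p : ℕ) {n : ℕ} (S A : Finset (Fin n)) : ℂ :=
  (∏ i ∈ A, uC p i) * (-1) ^ (S ∩ A).card

/-- The inverse weight `x(S,A) = (∏_{i∈A} v_i)·(-1)^{|S∩A|}`. -/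
def xC (p : ℕ) {n : ℕ} (S A : Finset (Fin n)) : ℂ :=
  (∏ i ∈ A, vC p i) * (-1) ^ (S ∩ A).card

lemma wC_mul_xC (p : ℕ) {n : ℕ} (S A : Finset (Fin n)) : wC p S A * xC p S A = 1 := by
  unfold wC xC
  rw [show (∏ i ∈ A, uC p i) * (-1 : ℂ) ^ (S ∩ A).card * ((∏ i ∈ A, vC p i) * (-1) ^ (S ∩ A).card)
      = ((∏ i ∈ A, uC p i) * ∏ i ∈ A, vC p i) * ((-1) ^ (S ∩ A).card * (-1) ^ (S ∩ A).card) by ring]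
  rw [← Finset.prod_mul_distrib, ← pow_add, Finset.prod_congr rfl fun i _ => uC_mul_vC p i]
  simp [neg_one_pow_eq_one_iff_even, (Even.add_self _)]

lemma prod_uC_mul {n : ℕ} (p : ℕ) (A B : Finset (Fin n)) :
    (∏ i ∈ A, uC p i) * ∏ i ∈ B, uC p i
      = ((sgn p A B : ℝ) : ℂ) * ∏ i ∈ A ∆ B, uC p i := by
  rw [sgn]
  push_cast
  rw [prod_mem_eq_prod_ite (uC p) A, prod_mem_eq_prod_ite (uC p) B,
    prod_mem_eq_prod_ite (uC p) (A ∆ B),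
    prod_mem_eq_prod_ite (fun i => ((eps p i : ℝ) : ℂ)) (A ∩ B),
    ← Finset.prod_mul_distrib, ← Finset.prod_mul_distrib]
  refine Finset.prod_congr rfl fun i _ => ?_
  by_cases hA : i ∈ A <;> by_cases hB : i ∈ B <;>
    simp only [Finset.mem_inter, Finset.mem_symmDiff, hA, hB, true_and, and_true,
      false_and, and_false, if_true, if_false, not_true, not_false_iff, or_false,
      false_or, if_neg, mul_one, one_mul] <;>
  · unfold uC eps
    split <;> simp [Complex.I_mul_I]

lemma wC_mul (p : ℕ) {n : ℕ} (S A B : Finset (Fin n)) :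
    wC p S A * wC p S B = ((sgn p A B : ℝ) : ℂ) * wC p S (A ∆ B) := by
  unfold wC
  rw [show (∏ i ∈ A, uC p i) * (-1 : ℂ) ^ (S ∩ A).card * ((∏ i ∈ B, uC p i) * (-1) ^ (S ∩ B).card)
      = ((∏ i ∈ A, uC p i) * ∏ i ∈ B, uC p i) * ((-1) ^ (S ∩ A).card * (-1) ^ (S ∩ B).card) by ring]
  rw [prod_uC_mul, parity1]
  ring

lemma wC_empty_right (p : ℕ) {n : ℕ} (S : Finset (Fin n)) : wC p S ∅ = 1 := by
  simp [wC]

/-- Key identity for diagonalization. -/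
lemma key_identity (p : ℕ) {n : ℕ} (S A C : Finset (Fin n)) :
    ((sgn p A (A ∆ C) : ℝ) : ℂ) * xC p S (A ∆ C) = wC p S A * xC p S C := by
  have h1 : wC p S A * wC p S (A ∆ C) = ((sgn p A (A ∆ C) : ℝ) : ℂ) * wC p S C := by
    rw [wC_mul, symmDiff_symmDiff_cancel_left]
  have h2 := wC_mul_xC p S (A ∆ C)
  have h3 := wC_mul_xC p S C
  calc ((sgn p A (A ∆ C) : ℝ) : ℂ) * xC p S (A ∆ C)
      = ((sgn p A (A ∆ C) : ℝ) : ℂ) * xC p S (A ∆ C) * (wC p S C * xC p S C) := by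
        rw [h3, mul_one]
    _ = (((sgn p A (A ∆ C) : ℝ) : ℂ) * wC p S C) * (xC p S (A ∆ C) * xC p S C) := by ring
    _ = (wC p S A * wC p S (A ∆ C)) * (xC p S (A ∆ C) * xC p S C) := by rw [h1]
    _ = (wC p S A * xC p S C) * (wC p S (A ∆ C) * xC p S (A ∆ C)) := by ring
    _ = wC p S A * xC p S C := by rw [h2, mul_one]

/-- The character `λ_S`. -/
def lam (S : Finset (Fin (p + q))) (U : Dl p q) : ℂ :=
  ∑ A : Finset (Fin (p + q)), (U A : ℂ) * wC p S A

lemma lam_one (S : Finset (Fin (p + q))) : lam S (1 : Dl p q) = 1 := by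
  unfold lam
  rw [Finset.sum_eq_single (∅ : Finset (Fin (p + q)))]
  · show ((one' ∅ : ℝ) : ℂ) * wC p S ∅ = 1
    simp [one', wC_empty_right]
  · intro A _ hA
    show ((one' A : ℝ) : ℂ) * wC p S A = 0
    simp [one', hA]
  · simp

lemma lam_mul (S : Finset (Fin (p + q))) (X Y : Dl p q) :
    lam S (X * Y) = lam S X * lam S Y := by
  unfold lam
  show ∑ C : Finset (Fin (p + q)), ((mul' X Y) C : ℂ) * wC p S C = _
  unfold mul'
  rw [Finset.sum_mul_sum]
  push_cast
  simp only [Finset.sum_mul]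
  rw [Finset.sum_comm]
  refine Finset.sum_congr rfl fun A _ => ?_
  refine Fintype.sum_equiv
    (Function.Involutive.toPerm (fun B => A ∆ B)
      (by intro B; exact symmDiff_symmDiff_cancel_left A B)) _ _ fun B => ?_
  try simp only [Function.Involutive.coe_toPerm]
  try simp only [Function.Involutive.toPerm, Equiv.coe_fn_mk]
  have h : wC p S A * wC p S (A ∆ B) = ((sgn p A (A ∆ B) : ℝ) : ℂ) * wC p S B := by
    rw [wC_mul, symmDiff_symmDiff_cancel_left]
  linear_combination (-(X A : ℂ) * (Y (A ∆ B) : ℂ)) * h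

/-- `lam S` as a monoid homomorphism. -/
def lamHom (S : Finset (Fin (p + q))) : Dl p q →* ℂ where
  toFun := lam S
  map_one' := lam_one S
  map_mul' := lam_mul S

lemma lam_conjS (S B : Finset (Fin (p + q))) (U : Dl p q) :
    lam S (conjS B U) = lam (S ∆ B) U := by
  unfold lam conjS
  refine Finset.sum_congr rfl fun A _ => ?_
  push_cast
  unfold wC
  have h := parity2 (R := ℂ) A S B
  linear_combination ((U A : ℂ) * ∏ i ∈ A, uC p i) * h

/-! ### Diagonalization of the regular representation -/

lemma rep_apply (U : Dl p q) (C B : Finset (Fin (p + q))) :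
    rep U C B = sgn p (B ∆ C) B * U (B ∆ C) := by
  show (mul' U (e B)) C = _
  unfold mul' e
  rw [Finset.sum_eq_single (B ∆ C)]
  · rw [symmDiff_symmDiff_cancel_right, if_pos rfl, mul_one]
  · intro A _ hA
    have : A ∆ C ≠ B := fun h => hA (by rw [← h, symmDiff_symmDiff_cancel_right])
    simp [this]
  · simp

/-- The eigenvector matrix. -/
def Qmat (p q : ℕ) : Matrix (Finset (Fin (p + q))) (Finset (Fin (p + q))) ℂ :=
  fun C S => xC p S C

/-- The inverse of the eigenvector matrix. -/
def Rmat (p q : ℕ) : Matrix (Finset (Fin (p + q))) (Finset (Fin (p + q))) ℂ :=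
  fun S C => wC p S C / (2 : ℂ) ^ (p + q)

lemma Qmat_mul_Rmat : Qmat p q * Rmat p q = 1 := by
  ext C C'
  rw [Matrix.mul_apply]
  have h : ∀ S : Finset (Fin (p + q)), Qmat p q C S * Rmat p q S C'
      = ((∏ i ∈ C, vC p i) * ∏ i ∈ C', uC p i) / (2 : ℂ) ^ (p + q)
        * (-1) ^ ((S ∩ (C ∆ C')).card) := by
    intro S
    unfold Qmat Rmat xC wC
    rw [← parity1]
    rw [Finset.inter_comm S C, Finset.inter_comm S C']
    ring
  rw [Finset.sum_congr rfl fun S _ => h S, ← Finset.mul_sum, sum_sign]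
  by_cases hC : C = C'
  · subst hC
    rw [if_pos (by simp), Matrix.one_apply_eq]
    rw [← Finset.prod_mul_distrib,
      Finset.prod_congr rfl fun i _ => by rw [mul_comm, uC_mul_vC]]
    simp
  · rw [if_neg (fun h => hC (by simpa [Finset.bot_eq_empty] using symmDiff_eq_bot.mp h)),
      Matrix.one_apply_ne hC]
    ring

lemma rep_mul_Qmat (U : Dl p q) :
    (rep U).map (Complex.ofRealHom) * Qmat p q
      = Qmat p q * Matrix.diagonal (fun S => lam S U) := by
  ext C S
  rw [Matrix.mul_apply, Matrix.mul_diagonal]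
  have h : ∀ B : Finset (Fin (p + q)),
      ((rep U).map (Complex.ofRealHom)) C B * Qmat p q B S
        = ((sgn p (B ∆ C) B : ℝ) : ℂ) * (U (B ∆ C) : ℂ) * xC p S B := by
    intro B
    rw [Matrix.map_apply, rep_apply]
    show ((sgn p (B ∆ C) B * U (B ∆ C) : ℝ) : ℂ) * xC p S B = _
    push_cast
    ring
  rw [Finset.sum_congr rfl fun B _ => h B]
  rw [show Qmat p q C S = xC p S C from rfl]
  have e1 : ∑ B : Finset (Fin (p + q)),
      ((sgn p (B ∆ C) B : ℝ) : ℂ) * (U (B ∆ C) : ℂ) * xC p S B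
      = ∑ A : Finset (Fin (p + q)),
      ((sgn p A (A ∆ C) : ℝ) : ℂ) * (U A : ℂ) * xC p S (A ∆ C) := by
    refine Fintype.sum_equiv
      (Function.Involutive.toPerm (fun A => A ∆ C)
        (by intro A; exact symmDiff_symmDiff_cancel_right C A)) _ _ fun A => ?_
    try simp only [Function.Involutive.coe_toPerm]
    try simp only [Function.Involutive.toPerm, Equiv.coe_fn_mk]
    rw [symmDiff_symmDiff_cancel_right]
  rw [e1]
  unfold lam
  rw [Finset.mul_sum]
  refine Finset.sum_congr rfl fun A _ => ?_
  have h2 := key_identity p S A C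
  linear_combination (U A : ℂ) * h2

lemma det_eq_prod_lam (U : Dl p q) :
    ((Det U : ℝ) : ℂ) = ∏ S : Finset (Fin (p + q)), lam S U := by
  have hdet : ((Det U : ℝ) : ℂ) = ((rep U).map (Complex.ofRealHom)).det := by
    rw [Det, show (rep U).map (Complex.ofRealHom)
        = Complex.ofRealHom.mapMatrix (rep U) from rfl, ← RingHom.map_det]
    rfl
  have hQ : (Qmat p q).det ≠ 0 :=
    Matrix.det_ne_zero_of_right_inverse Qmat_mul_Rmat
  have h := congrArg Matrix.det (rep_mul_Qmat U)
  rw [Matrix.det_mul, Matrix.det_mul, Matrix.det_diagonal] at h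
  rw [hdet]
  have := mul_right_cancel₀ hQ (h.trans (mul_comm _ _))
  exact this

end Dl

/-- the product of all `2^n` conjugates of `U` is the scalar
`Det(U) = det(β(U))` times the identity. -/
theorem prod_conjugates_eq_det (p q : ℕ) (U : Dl p q) :
    ∏ A : Finset (Fin (p + q)), Dl.conjS A U = Dl.Det U • (1 : Dl p q) := by
  open Dl in
  set P : Dl p q := ∏ A : Finset (Fin (p + q)), Dl.conjS A U with hP
  -- `P` is invariant under all conjugations
  have hinv : ∀ B : Finset (Fin (p + q)), Dl.conjS B P = P := by
    intro B
    have h1 : Dl.conjS B P = Dl.conjHom B P := rfl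
    rw [h1, hP, map_prod]
    have h2 : ∀ A : Finset (Fin (p + q)),
        Dl.conjHom B (Dl.conjS A U) = Dl.conjS (B ∆ A) U := fun A => Dl.conjS_conjS B A U
    rw [Finset.prod_congr rfl fun A _ => h2 A]
    exact Fintype.prod_equiv
      (Function.Involutive.toPerm (fun A => B ∆ A)
        (fun A => symmDiff_symmDiff_cancel_left B A)) _ _ fun A => rfl
  -- hence `P` is concentrated on the empty set
  have hzero : ∀ C : Finset (Fin (p + q)), C ≠ ∅ → P C = 0 := by
    intro C hC
    obtain ⟨l, hl⟩ := Finset.nonempty_iff_ne_empty.mpr hC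
    have h := congrFun (hinv {l}) C
    rw [Dl.conjS_apply, Finset.singleton_inter_of_mem hl] at h
    simp only [Finset.card_singleton, pow_one, neg_one_mul] at h
    linarith
  -- so `P` is a scalar
  have hscal : P = (P ∅) • (1 : Dl p q) := by
    funext C
    by_cases h : C = ∅
    · subst h
      show P ∅ = P ∅ * Dl.one' ∅
      simp [Dl.one']
    · rw [hzero C h]
      show (0 : ℝ) = P ∅ * Dl.one' C
      simp [Dl.one', h]
    -- and `λ_∅ P = Det U`
  have hlamP : Dl.lam (∅ : Finset (Fin (p + q))) P = ((Dl.Det U : ℝ) : ℂ) := by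
    have h1 : Dl.lam (∅ : Finset (Fin (p + q))) P
        = Dl.lamHom (∅ : Finset (Fin (p + q))) P := rfl
    rw [h1, hP, map_prod]
    have h2 : ∀ A : Finset (Fin (p + q)),
        Dl.lamHom (∅ : Finset (Fin (p + q))) (Dl.conjS A U) = Dl.lam A U := by
      intro A
      show Dl.lam (∅ : Finset (Fin (p + q))) (Dl.conjS A U) = Dl.lam A U
      rw [Dl.lam_conjS]
      congr 1
      exact bot_symmDiff A
    rw [Finset.prod_congr rfl fun A _ => h2 A, Dl.det_eq_prod_lam]
  have hlam1 : Dl.lam (∅ : Finset (Fin (p + q))) ((P ∅) • (1 : Dl p q)) = ((P ∅ : ℝ) : ℂ) := by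
    unfold Dl.lam
    rw [Finset.sum_eq_single (∅ : Finset (Fin (p + q)))]
    · show (((P ∅ * Dl.one' ∅ : ℝ)) : ℂ) * Dl.wC p (∅ : Finset (Fin (p + q))) ∅ = _
      simp [Dl.one', Dl.wC_empty_right]
    · intro A _ hA
      show (((P ∅ * Dl.one' A : ℝ)) : ℂ) * Dl.wC p (∅ : Finset (Fin (p + q))) A = 0
      simp [Dl.one', hA]
    · simp
  have hPD : P ∅ = Dl.Det U := by
    have := hlam1
    rw [← hscal, hlamP] at this
    exact_mod_cast this.symm
  rw [hscal, hPD]
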